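/- arXiv:1807.02128 — 2 statements merged into one kernel-verified Lean document; each statement's English description precedes it below -/
import Mathlib

section
/- The multi-sample objectives are monotonically nondecreasing in the number of samples: for all L ≥ 1, L^{L+1} ≥ L^{L}, where L^L = E_{z^{1:L} iid ∼ q}[log ((1/L) Σ_{l=1}^L w(z^l))] with w(z) = p(x,z)/q(z). -/
open MeasureTheory

/-- **Monotonicity of the multi-sample objectives in the number of samples.**
With importance weight `w z = p(x,z)/q(z)` (positive and integrable w.r.t. the
proposal law `ν`) and `L^L = E_{z^{1:L} iid ∼ ν}[log ((1/L) Σ_l w(z^l))]`,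
we have `L^{L+1} ≥ L^L` for all `L ≥ 1`. -/
theorem stmt_4 {α : Type*} [MeasurableSpace α] (ν : Measure α) [IsProbabilityMeasure ν]
    (w : α → ℝ) (hwmeas : Measurable w) (hw0 : ∀ z, 0 < w z)
    (hwint : Integrable w ν)
    (L : ℕ) (hL : 1 ≤ L)
    (hintL : Integrable
      (fun zs : Fin L → α => Real.log ((L : ℝ)⁻¹ * ∑ l, w (zs l)))
      (Measure.pi fun _ : Fin L => ν))
    (hintL1 : Integrable
      (fun zs : Fin (L + 1) → α => Real.log (((L : ℝ) + 1)⁻¹ * ∑ l, w (zs l)))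
      (Measure.pi fun _ : Fin (L + 1) => ν)) :
    ∫ zs : Fin L → α, Real.log ((L : ℝ)⁻¹ * ∑ l, w (zs l))
        ∂(Measure.pi fun _ : Fin L => ν)
      ≤ ∫ zs : Fin (L + 1) → α, Real.log (((L : ℝ) + 1)⁻¹ * ∑ l, w (zs l))
          ∂(Measure.pi fun _ : Fin (L + 1) => ν) := by
  haveI : NeZero L := ⟨by omega⟩
  set μL : Measure (Fin L → α) := Measure.pi fun _ : Fin L => ν with hμL
  set μ : Measure (Fin (L + 1) → α) := Measure.pi fun _ : Fin (L + 1) => ν with hμ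
  set g : (Fin L → α) → ℝ := fun ws => Real.log ((L : ℝ)⁻¹ * ∑ l, w (ws l)) with hg
  have hgmeas : Measurable g :=
    Real.measurable_log.comp (measurable_const.mul
      (Finset.measurable_sum Finset.univ fun l _ => hwmeas.comp (measurable_pi_apply l)))
  -- projections are measure preserving
  have hproj : ∀ j : Fin (L + 1),
      MeasurePreserving (fun zs : Fin (L + 1) → α => fun l : Fin L => zs (j.succAbove l))
        μ μL := by
    intro j
    have h1 := measurePreserving_piFinSuccAbove (fun _ : Fin (L + 1) => ν) j
    have h2 : MeasurePreserving (Prod.snd : α × (Fin L → α) → (Fin L → α))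
        (ν.prod μL) μL :=
      ⟨measurable_snd, by simp⟩
    exact h2.comp h1
  -- integral of g composed with projection
  have hcomp_int : ∀ j : Fin (L + 1),
      Integrable (fun zs : Fin (L + 1) → α => g (fun l => zs (j.succAbove l))) μ := by
    intro j
    exact ((hproj j).integrable_comp hgmeas.aestronglyMeasurable).2 hintL
  have hcomp_eq : ∀ j : Fin (L + 1),
      ∫ zs : Fin (L + 1) → α, g (fun l => zs (j.succAbove l)) ∂μ = ∫ ws, g ws ∂μL := by
    intro j
    rw [← (hproj j).map_eq]
    exact (integral_map (hproj j).aemeasurable hgmeas.aestronglyMeasurable).symm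
  -- combinatorial identity
  have hsum : ∀ zs : Fin (L + 1) → α,
      ∑ j : Fin (L + 1), ∑ l : Fin L, w (zs (j.succAbove l)) = L * ∑ k, w (zs k) := by
    intro zs
    have h : ∀ j : Fin (L + 1),
        ∑ l : Fin L, w (zs (j.succAbove l)) = (∑ k, w (zs k)) - w (zs j) := by
      intro j
      have := Fin.sum_univ_succAbove (fun k => w (zs k)) j
      linarith
    rw [Finset.sum_congr rfl fun j _ => h j, Finset.sum_sub_distrib,
      Finset.sum_const, Finset.card_univ, Fintype.card_fin]
    push_cast
    ring
  -- pointwise Jensen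
  have hpt : ∀ zs : Fin (L + 1) → α,
      ((L : ℝ) + 1)⁻¹ * ∑ j : Fin (L + 1), g (fun l => zs (j.succAbove l))
        ≤ Real.log (((L : ℝ) + 1)⁻¹ * ∑ l, w (zs l)) := by
    intro zs
    have hL1 : (0 : ℝ) < (L : ℝ) + 1 := by positivity
    have hLpos : (0 : ℝ) < (L : ℝ) := by exact_mod_cast hL
    have hjensen := (strictConcaveOn_log_Ioi.concaveOn).le_map_sum
      (t := (Finset.univ : Finset (Fin (L + 1))))
      (w := fun _ => ((L : ℝ) + 1)⁻¹)
      (p := fun j => (L : ℝ)⁻¹ * ∑ l : Fin L, w (zs (j.succAbove l)))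
      (fun i _ => by positivity)
      (by simp [Finset.card_univ]; field_simp)
      (fun j _ => by
        have : (0 : ℝ) < ∑ l : Fin L, w (zs (j.succAbove l)) :=
          Finset.sum_pos (fun l _ => hw0 _) Finset.univ_nonempty
        exact Set.mem_Ioi.2 (by positivity))
    have hkey : ∑ j : Fin (L + 1), ((L : ℝ) + 1)⁻¹ •
        ((L : ℝ)⁻¹ * ∑ l : Fin L, w (zs (j.succAbove l)))
          = ((L : ℝ) + 1)⁻¹ * ∑ l, w (zs l) := by
      simp only [smul_eq_mul, ← Finset.mul_sum, ← mul_assoc]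
      rw [hsum zs]
      field_simp
    rw [hkey] at hjensen
    calc ((L : ℝ) + 1)⁻¹ * ∑ j : Fin (L + 1), g (fun l => zs (j.succAbove l))
        = ∑ j : Fin (L + 1), ((L : ℝ) + 1)⁻¹ •
            Real.log ((L : ℝ)⁻¹ * ∑ l : Fin L, w (zs (j.succAbove l))) := by
          simp only [smul_eq_mul, Finset.mul_sum, hg]
      _ ≤ _ := hjensen
  -- put it together
  have hint_avg : Integrable
      (fun zs : Fin (L + 1) → α =>
        ((L : ℝ) + 1)⁻¹ * ∑ j : Fin (L + 1), g (fun l => zs (j.succAbove l))) μ :=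
    (integrable_finset_sum _ fun j _ => hcomp_int j).const_mul _
  calc ∫ ws, g ws ∂μL
      = ((L : ℝ) + 1)⁻¹ * ∑ j : Fin (L + 1),
          ∫ zs : Fin (L + 1) → α, g (fun l => zs (j.succAbove l)) ∂μ := by
        rw [Finset.sum_congr rfl fun j _ => hcomp_eq j, Finset.sum_const,
          Finset.card_univ, Fintype.card_fin]
        have : ((L : ℝ) + 1) ≠ 0 := by positivity
        push_cast
        field_simp
        rw [nsmul_eq_mul]; push_cast; ring
    _ = ∫ zs : Fin (L + 1) → α,
          ((L : ℝ) + 1)⁻¹ * ∑ j : Fin (L + 1), g (fun l => zs (j.succAbove l)) ∂μ := by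
        rw [← integral_finset_sum _ fun j _ => hcomp_int j, ← integral_const_mul]
    _ ≤ ∫ zs : Fin (L + 1) → α, Real.log (((L : ℝ) + 1)⁻¹ * ∑ l, w (zs l)) ∂μ :=
        integral_mono hint_avg hintL1 fun zs => hpt zs
end

section
/- Discrete-time control-inference duality: with the Girsanov likelihood ratio above, the ELBO for the sequential model equals E_{q_u}[log p(x_{1:K}|z_{0:K}) + log(p_0(z_0)/q_0(z_0)) − (1/2) Σ_k ‖u_k‖² δt − Σ_k u_kᵀ √δt ε_k], and since E_{q_u}[u_kᵀ ε_k | z_{0:k}] = 0, maximizing the ELBO over (u, q_0) is equivalent to the stochastic control problem of minimizing E_{q_u}[V(z_{0:K}) + (1/2) Σ_k ‖u_k‖² δt] where V(z_{0:K}) = −log(p_0(z_0)/q_0(z_0)) − Σ_k log p(x_k|z_{t_k}). -/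
open MeasureTheory Matrix Finset

/-- Multivariate Gaussian density on `ℝ^d` with mean `m` and covariance matrix `C`. -/
noncomputable def gaussD (d : ℕ) (m : Fin d → ℝ) (C : Matrix (Fin d) (Fin d) ℝ)
    (z : Fin d → ℝ) : ℝ :=
  (Real.sqrt ((2 * Real.pi) ^ d * C.det))⁻¹ *
    Real.exp (-(1 / 2) * ((z - m) ⬝ᵥ C⁻¹.mulVec (z - m)))

/-- Path density of the uncontrolled (prior) discrete-time dynamics
`z_{k+1} = z_k + f(z_k)δt + σ(z_k)√δt ε_k`, `z_0 ∼ p_0`. -/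
noncomputable def pPath (d K : ℕ) (f : (Fin d → ℝ) → Fin d → ℝ)
    (σm : (Fin d → ℝ) → Matrix (Fin d) (Fin d) ℝ) (δt : ℝ)
    (p0 : (Fin d → ℝ) → ℝ) (z : Fin (K + 1) → Fin d → ℝ) : ℝ :=
  p0 (z 0) * ∏ k : Fin K,
    gaussD d (z k.castSucc + δt • f (z k.castSucc))
      (δt • (σm (z k.castSucc) * (σm (z k.castSucc))ᵀ)) (z k.succ)

/-- Path density of the controlled dynamics with feedback control policy `u_k(z_k)`
and initial density `q_0`. -/
noncomputable def qPath (d K : ℕ) (f : (Fin d → ℝ) → Fin d → ℝ)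
    (σm : (Fin d → ℝ) → Matrix (Fin d) (Fin d) ℝ) (δt : ℝ)
    (q0 : (Fin d → ℝ) → ℝ) (u : Fin K → (Fin d → ℝ) → Fin d → ℝ)
    (z : Fin (K + 1) → Fin d → ℝ) : ℝ :=
  q0 (z 0) * ∏ k : Fin K,
    gaussD d (z k.castSucc + δt • f (z k.castSucc)
        + δt • (σm (z k.castSucc)).mulVec (u k (z k.castSucc)))
      (δt • (σm (z k.castSucc) * (σm (z k.castSucc))ᵀ)) (z k.succ)

/-- The noise increment `ε_k` realizing the trajectory under the controlled dynamics:
`√δt ε_k = σ(z_k)⁻¹(z_{k+1} − z_k − f(z_k)δt − σ(z_k) u_k(z_k) δt)`. -/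
noncomputable def noiseInc (d K : ℕ) (f : (Fin d → ℝ) → Fin d → ℝ)
    (σm : (Fin d → ℝ) → Matrix (Fin d) (Fin d) ℝ) (δt : ℝ)
    (u : Fin K → (Fin d → ℝ) → Fin d → ℝ) (z : Fin (K + 1) → Fin d → ℝ)
    (k : Fin K) : Fin d → ℝ :=
  (Real.sqrt δt)⁻¹ •
    (σm (z k.castSucc))⁻¹.mulVec
      (z k.succ - z k.castSucc - δt • f (z k.castSucc)
        - δt • (σm (z k.castSucc)).mulVec (u k (z k.castSucc)))

section Aux

lemma gaussD_aux_quad_form (d : ℕ) (s : Matrix (Fin d) (Fin d) ℝ) (hs : IsUnit s.det)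
    (δt : ℝ) (hδt : 0 < δt) (x y : Fin d → ℝ) :
    x ⬝ᵥ (δt • (s * sᵀ))⁻¹.mulVec y
      = δt⁻¹ * ((s⁻¹.mulVec x) ⬝ᵥ (s⁻¹.mulVec y)) := by
  have hCinv : (δt • (s * sᵀ))⁻¹ = δt⁻¹ • (sᵀ⁻¹ * s⁻¹) := by
    apply Matrix.inv_eq_right_inv
    rw [Matrix.smul_mul, Matrix.mul_smul, smul_smul, mul_inv_cancel₀ hδt.ne', one_smul,
      Matrix.mul_assoc, ← Matrix.mul_assoc sᵀ, Matrix.mul_nonsing_inv _ (by simpa using hs),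
      Matrix.one_mul, Matrix.mul_nonsing_inv _ hs]
  rw [hCinv, Matrix.smul_mulVec, dotProduct_smul, ← Matrix.mulVec_mulVec,
    ← Matrix.transpose_nonsing_inv, Matrix.dotProduct_mulVec, Matrix.vecMul_transpose]
  rfl

lemma gaussD_aux_step_quad (d : ℕ) (s : Matrix (Fin d) (Fin d) ℝ) (hs : IsUnit s.det)
    (δt : ℝ) (hδt : 0 < δt) (uu b : Fin d → ℝ) :
    -(1/2 : ℝ) * ((b + δt • s.mulVec uu) ⬝ᵥ (δt • (s * sᵀ))⁻¹.mulVec (b + δt • s.mulVec uu))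
      - (-(1/2 : ℝ) * (b ⬝ᵥ (δt • (s * sᵀ))⁻¹.mulVec b))
    = -((1/2) * (uu ⬝ᵥ uu) * δt) - uu ⬝ᵥ (s⁻¹.mulVec b) := by
  have hβ : s⁻¹.mulVec (b + δt • s.mulVec uu) = s⁻¹.mulVec b + δt • uu := by
    rw [Matrix.mulVec_add, Matrix.mulVec_smul, Matrix.mulVec_mulVec,
      Matrix.nonsing_inv_mul _ hs, Matrix.one_mulVec]
  rw [gaussD_aux_quad_form d s hs δt hδt, gaussD_aux_quad_form d s hs δt hδt, hβ]
  set β := s⁻¹.mulVec b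
  have h1 : (β + δt • uu) ⬝ᵥ (β + δt • uu)
      = β ⬝ᵥ β + δt * (uu ⬝ᵥ β) + δt * (β ⬝ᵥ uu) + δt * δt * (uu ⬝ᵥ uu) := by
    simp [dotProduct_add, add_dotProduct, dotProduct_smul,
      smul_dotProduct, smul_eq_mul]
    ring
  rw [h1, dotProduct_comm β uu]
  field_simp
  ring

lemma gaussD_cov_pos (d : ℕ) (m : Fin d → ℝ) (s : Matrix (Fin d) (Fin d) ℝ)
    (hs : IsUnit s.det) (δt : ℝ) (hδt : 0 < δt) (z : Fin d → ℝ) :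
    0 < gaussD d m (δt • (s * sᵀ)) z := by
  have h1 : (δt • (s * sᵀ)).det = δt ^ d * (s.det * s.det) := by
    rw [Matrix.det_smul, Matrix.det_mul, Matrix.det_transpose]; simp
  have h2 : s.det ≠ 0 := by simpa [isUnit_iff_ne_zero] using hs
  have h3 : 0 < s.det * s.det := mul_self_pos.mpr h2
  have hpi := Real.pi_pos
  have hdet : 0 < (2 * Real.pi) ^ d * (δt • (s * sᵀ)).det := by rw [h1]; positivity
  unfold gaussD
  positivity

lemma gaussD_step_log (d : ℕ) (s : Matrix (Fin d) (Fin d) ℝ) (hs : IsUnit s.det)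
    (δt : ℝ) (hδt : 0 < δt) (m uu z' : Fin d → ℝ) :
    Real.log (gaussD d m (δt • (s * sᵀ)) z')
      - Real.log (gaussD d (m + δt • s.mulVec uu) (δt • (s * sᵀ)) z')
    = -((1/2) * (uu ⬝ᵥ uu) * δt)
      - uu ⬝ᵥ (s⁻¹.mulVec (z' - m - δt • s.mulVec uu)) := by
  have h1 : (δt • (s * sᵀ)).det = δt ^ d * (s.det * s.det) := by
    rw [Matrix.det_smul, Matrix.det_mul, Matrix.det_transpose]; simp
  have h2 : s.det ≠ 0 := by simpa [isUnit_iff_ne_zero] using hs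
  have h3 : 0 < s.det * s.det := mul_self_pos.mpr h2
  have hpi := Real.pi_pos
  have hdet : 0 < (2 * Real.pi) ^ d * (δt • (s * sᵀ)).det := by rw [h1]; positivity
  have hN : ((Real.sqrt ((2 * Real.pi) ^ d * (δt • (s * sᵀ)).det))⁻¹ : ℝ) ≠ 0 := by
    positivity
  unfold gaussD
  rw [Real.log_mul hN (Real.exp_ne_zero _), Real.log_mul hN (Real.exp_ne_zero _),
    Real.log_exp, Real.log_exp]
  have hb : z' - (m + δt • s.mulVec uu) = z' - m - δt • s.mulVec uu := by abel
  have key2 := gaussD_aux_step_quad d s hs δt hδt uu (z' - m - δt • s.mulVec uu)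
  have ha : z' - m - δt • s.mulVec uu + δt • s.mulVec uu = z' - m := by abel
  rw [ha] at key2
  rw [hb]
  linarith [key2]

end Aux

/-- **Discrete-time control–inference duality.**
For the discrete-time latent Gaussian state space model with factorized observation
likelihood `g k (z_{k+1}) = p(x_{k+1}|z_{k+1})`, the ELBO (with variational path density
`q_u` and generative path density `p · likelihood`) equals
`E_{q_u}[log p(x|z) + log(p_0/q_0) − (1/2)Σ‖u_k‖²δt − Σ u_kᵀ√δt ε_k]`; and since the
martingale term has zero expectation (`hmart`), the ELBO equals
`−E_{q_u}[V(z_{0:K}) + (1/2)Σ‖u_k‖²δt]` with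
`V(z_{0:K}) = −log(p_0(z_0)/q_0(z_0)) − Σ_k log p(x_k|z_k)`:
maximizing the ELBO over `(u, q_0)` is the stochastic optimal control problem of
minimizing `E_{q_u}[V + (1/2)Σ‖u_k‖²δt]`. -/
theorem stmt_11 (d K : ℕ)
    (f : (Fin d → ℝ) → Fin d → ℝ) (σm : (Fin d → ℝ) → Matrix (Fin d) (Fin d) ℝ)
    (δt : ℝ) (hδt : 0 < δt) (hσ : ∀ v, IsUnit (σm v).det)
    (p0 q0 : (Fin d → ℝ) → ℝ) (hp0 : ∀ v, 0 < p0 v) (hq0 : ∀ v, 0 < q0 v)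
    (u : Fin K → (Fin d → ℝ) → Fin d → ℝ)
    (g : Fin K → (Fin d → ℝ) → ℝ) (hg : ∀ k v, 0 < g k v)
    (ρ : Measure (Fin (K + 1) → Fin d → ℝ))
    (hρ : ρ = Measure.pi fun _ : Fin (K + 1) => (volume : Measure (Fin d → ℝ)))
    -- integrability of the various pieces of the ELBO integrand
    (hInt1 : Integrable (fun z => qPath d K f σm δt q0 u z *
        Real.log (∏ k : Fin K, g k (z k.succ))) ρ)
    (hInt2 : Integrable (fun z => qPath d K f σm δt q0 u z *
        Real.log (p0 (z 0) / q0 (z 0))) ρ)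
    (hInt3 : Integrable (fun z => qPath d K f σm δt q0 u z *
        ((1 / 2) * ∑ k : Fin K,
          (u k (z k.castSucc) ⬝ᵥ u k (z k.castSucc)) * δt)) ρ)
    (hInt4 : Integrable (fun z => qPath d K f σm δt q0 u z *
        (∑ k : Fin K, u k (z k.castSucc) ⬝ᵥ
          (Real.sqrt δt • noiseInc d K f σm δt u z k))) ρ)
    -- the martingale term has zero expectation under `q_u`
    (hmart : ∫ z, qPath d K f σm δt q0 u z *
        (∑ k : Fin K, u k (z k.castSucc) ⬝ᵥ
          (Real.sqrt δt • noiseInc d K f σm δt u z k)) ∂ρ = 0) :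
    -- the ELBO written via the discrete Girsanov likelihood ratio
    (∫ z, qPath d K f σm δt q0 u z *
        Real.log ((pPath d K f σm δt p0 z * ∏ k : Fin K, g k (z k.succ)) /
          qPath d K f σm δt q0 u z) ∂ρ
      = ∫ z, qPath d K f σm δt q0 u z *
          (Real.log (∏ k : Fin K, g k (z k.succ))
            + Real.log (p0 (z 0) / q0 (z 0))
            - (1 / 2) * ∑ k : Fin K, (u k (z k.castSucc) ⬝ᵥ u k (z k.castSucc)) * δt
            - ∑ k : Fin K, u k (z k.castSucc) ⬝ᵥ
                (Real.sqrt δt • noiseInc d K f σm δt u z k)) ∂ρ) ∧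
    -- hence the ELBO equals minus the stochastic-optimal-control cost
    (∫ z, qPath d K f σm δt q0 u z *
        Real.log ((pPath d K f σm δt p0 z * ∏ k : Fin K, g k (z k.succ)) /
          qPath d K f σm δt q0 u z) ∂ρ
      = -∫ z, qPath d K f σm δt q0 u z *
          ((-Real.log (p0 (z 0) / q0 (z 0)) - ∑ k : Fin K, Real.log (g k (z k.succ)))
            + (1 / 2) * ∑ k : Fin K,
                (u k (z k.castSucc) ⬝ᵥ u k (z k.castSucc)) * δt) ∂ρ) := by

  have key : ∀ z : Fin (K + 1) → Fin d → ℝ,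
      Real.log ((pPath d K f σm δt p0 z * ∏ k : Fin K, g k (z k.succ)) /
          qPath d K f σm δt q0 u z)
        = Real.log (∏ k : Fin K, g k (z k.succ)) + Real.log (p0 (z 0) / q0 (z 0))
          - (1 / 2) * ∑ k : Fin K, (u k (z k.castSucc) ⬝ᵥ u k (z k.castSucc)) * δt
          - ∑ k : Fin K, u k (z k.castSucc) ⬝ᵥ
              (Real.sqrt δt • noiseInc d K f σm δt u z k) := by
    intro z
    have hgp : ∀ k : Fin K, 0 < gaussD d (z k.castSucc + δt • f (z k.castSucc))
        (δt • (σm (z k.castSucc) * (σm (z k.castSucc))ᵀ)) (z k.succ) :=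
      fun k => gaussD_cov_pos d _ _ (hσ _) δt hδt _
    have hgq : ∀ k : Fin K, 0 < gaussD d (z k.castSucc + δt • f (z k.castSucc)
          + δt • (σm (z k.castSucc)).mulVec (u k (z k.castSucc)))
        (δt • (σm (z k.castSucc) * (σm (z k.castSucc))ᵀ)) (z k.succ) :=
      fun k => gaussD_cov_pos d _ _ (hσ _) δt hδt _
    have hpp : 0 < pPath d K f σm δt p0 z :=
      mul_pos (hp0 _) (Finset.prod_pos fun k _ => hgp k)
    have hqq : 0 < qPath d K f σm δt q0 u z :=
      mul_pos (hq0 _) (Finset.prod_pos fun k _ => hgq k)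
    have hG : 0 < ∏ k : Fin K, g k (z k.succ) := Finset.prod_pos fun k _ => hg _ _
    have hstep : ∀ k : Fin K,
        Real.log (gaussD d (z k.castSucc + δt • f (z k.castSucc))
            (δt • (σm (z k.castSucc) * (σm (z k.castSucc))ᵀ)) (z k.succ))
          - Real.log (gaussD d (z k.castSucc + δt • f (z k.castSucc)
              + δt • (σm (z k.castSucc)).mulVec (u k (z k.castSucc)))
            (δt • (σm (z k.castSucc) * (σm (z k.castSucc))ᵀ)) (z k.succ))
        = -((1 / 2) * (u k (z k.castSucc) ⬝ᵥ u k (z k.castSucc)) * δt)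
          - u k (z k.castSucc) ⬝ᵥ (Real.sqrt δt • noiseInc d K f σm δt u z k) := by
      intro k
      have hni : Real.sqrt δt • noiseInc d K f σm δt u z k
          = (σm (z k.castSucc))⁻¹.mulVec
              (z k.succ - (z k.castSucc + δt • f (z k.castSucc))
                - δt • (σm (z k.castSucc)).mulVec (u k (z k.castSucc))) := by
        unfold noiseInc
        rw [smul_smul, mul_inv_cancel₀ (Real.sqrt_pos.mpr hδt).ne', one_smul]
        congr 1
        abel
      rw [hni]
      exact gaussD_step_log d _ (hσ _) δt hδt _ _ _
    have hsum : (∑ k : Fin K, Real.log (gaussD d (z k.castSucc + δt • f (z k.castSucc))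
            (δt • (σm (z k.castSucc) * (σm (z k.castSucc))ᵀ)) (z k.succ)))
          - ∑ k : Fin K, Real.log (gaussD d (z k.castSucc + δt • f (z k.castSucc)
              + δt • (σm (z k.castSucc)).mulVec (u k (z k.castSucc)))
            (δt • (σm (z k.castSucc) * (σm (z k.castSucc))ᵀ)) (z k.succ))
        = -((1 / 2) * ∑ k : Fin K, (u k (z k.castSucc) ⬝ᵥ u k (z k.castSucc)) * δt)
          - ∑ k : Fin K, u k (z k.castSucc) ⬝ᵥ
              (Real.sqrt δt • noiseInc d K f σm δt u z k) := by
      rw [← Finset.sum_sub_distrib,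
        Finset.sum_congr rfl fun k _ => hstep k,
        Finset.sum_sub_distrib, Finset.sum_neg_distrib]
      congr 2
      rw [Finset.mul_sum]
      exact Finset.sum_congr rfl fun k _ => mul_assoc _ _ _
    rw [Real.log_div (mul_pos hpp hG).ne' hqq.ne', Real.log_mul hpp.ne' hG.ne']
    unfold pPath qPath
    rw [Real.log_mul (hp0 _).ne' (Finset.prod_pos fun k _ => hgp k).ne',
      Real.log_mul (hq0 _).ne' (Finset.prod_pos fun k _ => hgq k).ne',
      Real.log_prod (fun k _ => (hgp k).ne'),
      Real.log_prod (fun k _ => (hgq k).ne'),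
      Real.log_div (hp0 _).ne' (hq0 _).ne']
    linarith [hsum]
  have h1 : ∫ z, qPath d K f σm δt q0 u z *
      Real.log ((pPath d K f σm δt p0 z * ∏ k : Fin K, g k (z k.succ)) /
        qPath d K f σm δt q0 u z) ∂ρ
    = ∫ z, qPath d K f σm δt q0 u z *
        (Real.log (∏ k : Fin K, g k (z k.succ))
          + Real.log (p0 (z 0) / q0 (z 0))
          - (1 / 2) * ∑ k : Fin K, (u k (z k.castSucc) ⬝ᵥ u k (z k.castSucc)) * δt
          - ∑ k : Fin K, u k (z k.castSucc) ⬝ᵥ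
              (Real.sqrt δt • noiseInc d K f σm δt u z k)) ∂ρ := by
    exact integral_congr_ae (Filter.Eventually.of_forall fun z =>
      congrArg (fun t => qPath d K f σm δt q0 u z * t) (key z))
  refine ⟨h1, ?_⟩
  rw [h1]
  have e1 : (fun z => qPath d K f σm δt q0 u z *
        (Real.log (∏ k : Fin K, g k (z k.succ))
          + Real.log (p0 (z 0) / q0 (z 0))
          - (1 / 2) * ∑ k : Fin K, (u k (z k.castSucc) ⬝ᵥ u k (z k.castSucc)) * δt
          - ∑ k : Fin K, u k (z k.castSucc) ⬝ᵥ
              (Real.sqrt δt • noiseInc d K f σm δt u z k)))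
      = fun z => (qPath d K f σm δt q0 u z * Real.log (∏ k : Fin K, g k (z k.succ))
            + qPath d K f σm δt q0 u z * Real.log (p0 (z 0) / q0 (z 0))
          - qPath d K f σm δt q0 u z *
              ((1 / 2) * ∑ k : Fin K, (u k (z k.castSucc) ⬝ᵥ u k (z k.castSucc)) * δt))
          - qPath d K f σm δt q0 u z *
              (∑ k : Fin K, u k (z k.castSucc) ⬝ᵥ
                (Real.sqrt δt • noiseInc d K f σm δt u z k)) := by
    funext z; ring
  have hf12 : Integrable (fun z => qPath d K f σm δt q0 u z *
      Real.log (∏ k : Fin K, g k (z k.succ))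
      + qPath d K f σm δt q0 u z * Real.log (p0 (z 0) / q0 (z 0))) ρ := hInt1.add hInt2
  have hf123 : Integrable (fun z => qPath d K f σm δt q0 u z *
      Real.log (∏ k : Fin K, g k (z k.succ))
      + qPath d K f σm δt q0 u z * Real.log (p0 (z 0) / q0 (z 0))
      - qPath d K f σm δt q0 u z *
          ((1 / 2) * ∑ k : Fin K, (u k (z k.castSucc) ⬝ᵥ u k (z k.castSucc)) * δt)) ρ :=
    hf12.sub hInt3
  rw [e1, integral_sub hf123 hInt4, integral_sub hf12 hInt3, integral_add hInt1 hInt2,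
    hmart]
  have e2 : (fun z => qPath d K f σm δt q0 u z *
        ((-Real.log (p0 (z 0) / q0 (z 0)) - ∑ k : Fin K, Real.log (g k (z k.succ)))
          + (1 / 2) * ∑ k : Fin K, (u k (z k.castSucc) ⬝ᵥ u k (z k.castSucc)) * δt))
      = fun z => (-(qPath d K f σm δt q0 u z * Real.log (∏ k : Fin K, g k (z k.succ)))
            - qPath d K f σm δt q0 u z * Real.log (p0 (z 0) / q0 (z 0))
          + qPath d K f σm δt q0 u z *
              ((1 / 2) * ∑ k : Fin K, (u k (z k.castSucc) ⬝ᵥ u k (z k.castSucc)) * δt)) := by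
    funext z
    rw [← Real.log_prod fun k _ => (hg k _).ne']
    ring
  have hneg : Integrable (fun z => -(qPath d K f σm δt q0 u z *
      Real.log (∏ k : Fin K, g k (z k.succ)))) ρ := hInt1.neg
  have hns : Integrable (fun z => -(qPath d K f σm δt q0 u z *
      Real.log (∏ k : Fin K, g k (z k.succ)))
      - qPath d K f σm δt q0 u z * Real.log (p0 (z 0) / q0 (z 0))) ρ := hneg.sub hInt2
  rw [e2, integral_add hns hInt3, integral_sub hneg hInt2, integral_neg]
  ring
end
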